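/- If U^n, V^n ∈ ℝ^{dN} satisfy the discrete variational equations (I_N ⊗ K)·(W^{n+1} − W^n)/Δt + (D_h ⊗ M)·W^{n+1/2} = H·W^{n+1/2} with W^{n+1/2} = (W^{n+1}+W^n)/2, H symmetric, and D_h skew-symmetric, then ⟨(I_N ⊗ K)·U^{n+1}, V^{n+1}⟩ = ⟨(I_N ⊗ K)·U^n, V^n⟩. -/
import Mathlib


open Matrix
open scoped Kronecker

lemma skew_dot {m : Type*} [Fintype m] (A : Matrix m m ℝ) (hA : Aᵀ = -A)
    (u w : m → ℝ) : (A *ᵥ u) ⬝ᵥ w = -(u ⬝ᵥ (A *ᵥ w)) := by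
  have h : u ⬝ᵥ (Aᵀ *ᵥ w) = (A *ᵥ u) ⬝ᵥ w := by
    rw [dotProduct_mulVec, vecMul_transpose]
  rw [← h, hA, neg_mulVec, dotProduct_neg]

lemma symm_dot {m : Type*} [Fintype m] (A : Matrix m m ℝ) (hA : Aᵀ = A)
    (u w : m → ℝ) : (A *ᵥ u) ⬝ᵥ w = u ⬝ᵥ (A *ᵥ w) := by
  have h : u ⬝ᵥ (Aᵀ *ᵥ w) = (A *ᵥ u) ⬝ᵥ w := by
    rw [dotProduct_mulVec, vecMul_transpose]
  rw [← h, hA]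

/-- Fully discrete conservation of symplecticity for the implicit midpoint
discretization: if `U^n`, `V^n` satisfy
`(I_N ⊗ K)(W^{n+1} − W^n)/Δt + (D_h ⊗ M) W^{n+1/2} = H W^{n+1/2}`
with `H` symmetric and `D_h` skew-symmetric, then
`⟨(I_N ⊗ K) U^{n+1}, V^{n+1}⟩ = ⟨(I_N ⊗ K) U^n, V^n⟩`. -/
theorem stmt12 (N d : ℕ) (hN : 1 ≤ N) (hd : 1 ≤ d) (Δt : ℝ) (hΔt : 0 < Δt)
    (K M : Matrix (Fin d) (Fin d) ℝ)
    (hK : Kᵀ = -K) (hM : Mᵀ = -M)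
    (Dh : Matrix (Fin N) (Fin N) ℝ) (hDh : Dhᵀ = -Dh)
    (H : Matrix (Fin N × Fin d) (Fin N × Fin d) ℝ) (hH : Hᵀ = H)
    (U V : ℕ → (Fin N × Fin d → ℝ))
    (hU : ∀ n,
      ((1 : Matrix (Fin N) (Fin N) ℝ) ⊗ₖ K) *ᵥ ((Δt)⁻¹ • (U (n+1) - U n))
        + (Dh ⊗ₖ M) *ᵥ ((1/2 : ℝ) • (U (n+1) + U n))
      = H *ᵥ ((1/2 : ℝ) • (U (n+1) + U n)))
    (hV : ∀ n,
      ((1 : Matrix (Fin N) (Fin N) ℝ) ⊗ₖ K) *ᵥ ((Δt)⁻¹ • (V (n+1) - V n))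
        + (Dh ⊗ₖ M) *ᵥ ((1/2 : ℝ) • (V (n+1) + V n))
      = H *ᵥ ((1/2 : ℝ) • (V (n+1) + V n))) :
    ∀ n, (((1 : Matrix (Fin N) (Fin N) ℝ) ⊗ₖ K) *ᵥ U (n+1)) ⬝ᵥ V (n+1)
       = (((1 : Matrix (Fin N) (Fin N) ℝ) ⊗ₖ K) *ᵥ U n) ⬝ᵥ V n := by
  intro n
  set A : Matrix (Fin N × Fin d) (Fin N × Fin d) ℝ :=
    (1 : Matrix (Fin N) (Fin N) ℝ) ⊗ₖ K with hAdef
  set S : Matrix (Fin N × Fin d) (Fin N × Fin d) ℝ := H - Dh ⊗ₖ M with hSdef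
  have hA : Aᵀ = -A := by
    rw [hAdef, ← kroneckerMap_transpose, transpose_one, hK]
    ext i j
    simp [Matrix.neg_apply, mul_neg]
  have hBsymm : (Dh ⊗ₖ M)ᵀ = Dh ⊗ₖ M := by
    rw [← kroneckerMap_transpose, hDh, hM]
    ext i j
    simp [Matrix.neg_apply]
  have hS : Sᵀ = S := by
    rw [hSdef, transpose_sub, hH, hBsymm]
  have step : ∀ (W : ℕ → (Fin N × Fin d → ℝ)),
      (A *ᵥ ((Δt)⁻¹ • (W (n+1) - W n))
        + (Dh ⊗ₖ M) *ᵥ ((1/2 : ℝ) • (W (n+1) + W n))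
      = H *ᵥ ((1/2 : ℝ) • (W (n+1) + W n)))
      → A *ᵥ (W (n+1) - W n) = Δt • (S *ᵥ ((1/2 : ℝ) • (W (n+1) + W n))) := by
    intro W h
    have h1 : A *ᵥ ((Δt)⁻¹ • (W (n+1) - W n))
        = S *ᵥ ((1/2 : ℝ) • (W (n+1) + W n)) := by
      rw [hSdef, sub_mulVec]
      exact eq_sub_of_add_eq h
    calc A *ᵥ (W (n+1) - W n)
        = Δt • (A *ᵥ ((Δt)⁻¹ • (W (n+1) - W n))) := by
          rw [mulVec_smul, smul_smul, mul_inv_cancel₀ hΔt.ne', one_smul]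
      _ = Δt • (S *ᵥ ((1/2 : ℝ) • (W (n+1) + W n))) := by rw [h1]
  have hu := step U (hU n)
  have hv := step V (hV n)
  have key : (A *ᵥ U (n+1)) ⬝ᵥ V (n+1) - (A *ᵥ U n) ⬝ᵥ V n
      = (A *ᵥ (U (n+1) - U n)) ⬝ᵥ ((1/2 : ℝ) • (V (n+1) + V n))
        + (A *ᵥ ((1/2 : ℝ) • (U (n+1) + U n))) ⬝ᵥ (V (n+1) - V n) := by
    simp only [mulVec_sub, mulVec_add, mulVec_smul, sub_dotProduct, add_dotProduct,
      dotProduct_sub, dotProduct_add, smul_dotProduct, dotProduct_smul, smul_eq_mul]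
    ring
  have t1 : (A *ᵥ (U (n+1) - U n)) ⬝ᵥ ((1/2 : ℝ) • (V (n+1) + V n))
      = Δt * ((S *ᵥ ((1/2 : ℝ) • (U (n+1) + U n))) ⬝ᵥ ((1/2 : ℝ) • (V (n+1) + V n))) := by
    rw [hu, smul_dotProduct, smul_eq_mul]
  have t2 : (A *ᵥ ((1/2 : ℝ) • (U (n+1) + U n))) ⬝ᵥ (V (n+1) - V n)
      = -(Δt * ((S *ᵥ ((1/2 : ℝ) • (U (n+1) + U n))) ⬝ᵥ ((1/2 : ℝ) • (V (n+1) + V n)))) := by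
    rw [skew_dot A hA, hv, dotProduct_smul, smul_eq_mul,
      symm_dot S hS]
  have : (A *ᵥ U (n+1)) ⬝ᵥ V (n+1) - (A *ᵥ U n) ⬝ᵥ V n = 0 := by
    rw [key, t1, t2]; ring
  linarith [this]
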